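/- Let X be a compact metric space and let μ and ν be Borel probability measures on X. Then there exists a 1-Lipschitz function f* : X → ℝ that attains the supremum of ∫ f dμ − ∫ f dν over all 1-Lipschitz functions f : X → ℝ; that is, for every 1-Lipschitz g : X → ℝ, ∫ g dμ − ∫ g dν ≤ ∫ f* dμ − ∫ f* dν. -/

import Mathlib

open MeasureTheory BoundedContinuousFunction

/-- Existence of an optimal 1-Lipschitz Wasserstein critic on a compact metric space:
some 1-Lipschitz `f*` maximizes `∫ f dμ − ∫ f dν` over all 1-Lipschitz functions `f`. -/
theorem exists_optimal_lipschitz_critic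
    {X : Type*} [MetricSpace X] [CompactSpace X] [MeasurableSpace X] [BorelSpace X]
    (μ ν : Measure X) [IsProbabilityMeasure μ] [IsProbabilityMeasure ν] :
    ∃ fstar : X → ℝ, LipschitzWith 1 fstar ∧
      ∀ g : X → ℝ, LipschitzWith 1 g →
        (∫ x, g x ∂μ) - (∫ x, g x ∂ν) ≤ (∫ x, fstar x ∂μ) - (∫ x, fstar x ∂ν) := by
  -- X is nonempty since it carries a probability measure
  have hne : Nonempty X := by
    by_contra h
    rw [not_nonempty_iff] at h
    have h1 : μ Set.univ = 1 := measure_univ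
    rw [Set.univ_eq_empty_iff.2 h] at h1
    simp at h1
  obtain ⟨x₀⟩ := hne
  set D := Metric.diam (Set.univ : Set X) with hD
  -- the candidate set: 1-Lipschitz bounded continuous functions vanishing at x₀
  set A : Set (X →ᵇ ℝ) := {f | LipschitzWith 1 (⇑f) ∧ f x₀ = 0} with hAdef
  have hA_closed : IsClosed A := by
    have h1 : IsClosed {f : X →ᵇ ℝ | LipschitzWith 1 (⇑f)} := by
      have heq : {f : X →ᵇ ℝ | LipschitzWith 1 (⇑f)}
          = ⋂ (x : X) (y : X), {f : X →ᵇ ℝ | dist (f x) (f y) ≤ dist x y} := by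
        ext f
        simp only [Set.mem_setOf_eq, Set.mem_iInter]
        rw [lipschitzWith_iff_dist_le_mul]
        simp
      rw [heq]
      refine isClosed_iInter fun x => isClosed_iInter fun y => ?_
      exact isClosed_le
        ((continuous_eval_const _).dist
          (continuous_eval_const _)) continuous_const
    have h2 : IsClosed {f : X →ᵇ ℝ | f x₀ = 0} :=
      isClosed_eq (continuous_eval_const _) continuous_const
    exact h1.inter h2
  have hA_compact : IsCompact A := by
    refine BoundedContinuousFunction.arzela_ascoli₂ (Metric.closedBall (0 : ℝ) D)
      (isCompact_closedBall 0 D) A hA_closed ?_ ?_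
    · intro f x hf
      rw [Metric.mem_closedBall]
      calc dist (f x) 0 = dist (f x) (f x₀) := by rw [hf.2]
        _ ≤ 1 * dist x x₀ := hf.1.dist_le_mul x x₀
        _ = dist x x₀ := one_mul _
        _ ≤ D := Metric.dist_le_diam_of_mem isCompact_univ.isBounded trivial trivial
    · refine Metric.equicontinuous_of_continuity_modulus id ?_ _ ?_
      · simpa using Filter.tendsto_id (α := ℝ)
      · intro x y f
        have := f.2.1.dist_le_mul x y
        simpa using this
  -- the functional
  set L : (X →ᵇ ℝ) → ℝ := fun f => (∫ x, f x ∂μ) - (∫ x, f x ∂ν) with hL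
  have hint : ∀ (κ : Measure X) [IsProbabilityMeasure κ],
      LipschitzWith 1 (fun f : X →ᵇ ℝ => ∫ x, f x ∂κ) := by
    intro κ _
    refine LipschitzWith.of_dist_le_mul fun f g => ?_
    rw [NNReal.coe_one, one_mul, dist_eq_norm, ← integral_sub (f.integrable κ) (g.integrable κ)]
    have : ‖∫ x, (f - g) x ∂κ‖ ≤ ‖f - g‖ :=
      BoundedContinuousFunction.norm_integral_le_norm κ (f - g)
    simpa [dist_eq_norm] using this
  have hLcont : Continuous L := ((hint μ).continuous).sub ((hint ν).continuous)
  have hA_ne : A.Nonempty := by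
    refine ⟨0, ?_, rfl⟩
    exact (LipschitzWith.const (0 : ℝ) : LipschitzWith 0 fun _ : X => (0:ℝ)).weaken
      (by norm_num)
  obtain ⟨f₀, hf₀A, hf₀max⟩ := hA_compact.exists_isMaxOn hA_ne hLcont.continuousOn
  refine ⟨⇑f₀, hf₀A.1, ?_⟩
  intro g hg
  -- shift g to vanish at x₀
  have hgc : Continuous g := hg.continuous
  set g' : X →ᵇ ℝ := BoundedContinuousFunction.mkOfCompact ⟨fun x => g x - g x₀,
    hgc.sub continuous_const⟩ with hg'
  have hg'A : g' ∈ A := by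
    constructor
    · have : LipschitzWith 1 (fun x => g x - g x₀) := by
        intro x y
        simpa [edist_sub_right] using hg x y
      exact this
    · simp [hg']
  have key : L g' ≤ L f₀ := hf₀max hg'A
  have hgi : Integrable g μ := by
    have := (BoundedContinuousFunction.mkOfCompact ⟨g, hgc⟩).integrable μ
    exact this
  have hgi' : Integrable g ν := by
    have := (BoundedContinuousFunction.mkOfCompact ⟨g, hgc⟩).integrable ν
    exact this
  have hμ : ∫ x, g' x ∂μ = (∫ x, g x ∂μ) - g x₀ := by
    simp only [hg', BoundedContinuousFunction.mkOfCompact_apply, ContinuousMap.coe_mk]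
    rw [integral_sub hgi (integrable_const _)]
    simp
  have hν : ∫ x, g' x ∂ν = (∫ x, g x ∂ν) - g x₀ := by
    simp only [hg', BoundedContinuousFunction.mkOfCompact_apply, ContinuousMap.coe_mk]
    rw [integral_sub hgi' (integrable_const _)]
    simp
  calc (∫ x, g x ∂μ) - (∫ x, g x ∂ν)
      = L g' := by rw [hL]; simp only [hμ, hν]; ring
    _ ≤ L f₀ := key
    _ = (∫ x, f₀ x ∂μ) - (∫ x, f₀ x ∂ν) := rfl
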